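/- Refinement tightens the relaxation: let g : [a, b] → ℝ be convex and differentiable, let P ⊆ P' be two partitions of [a, b] (both containing a and b, with distinct derivative values at consecutive points). Then the convex hull of the triangles constructed from P' is contained in the convex hull of the triangles constructed from P. -/

import Mathlib

/-- Intersection point of the tangent lines to `g` at `p` and `q`
(with derivative function `g'`). -/
noncomputable def tangentVertex (g g' : ℝ → ℝ) (p q : ℝ) : ℝ × ℝ :=
  let xs := (g q - g p - q * g' q + p * g' p) / (g' p - g' q)
  (xs, g p + g' p * (xs - p))

/-- `p` and `q` are consecutive points of the partition `P`. -/
def Consecutive (P : Finset ℝ) (p q : ℝ) : Prop :=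
  p ∈ P ∧ q ∈ P ∧ p < q ∧ ∀ r ∈ P, ¬(p < r ∧ r < q)

/-- The polyhedral relaxation of `y = g x` built from the partition `P`:
the convex hull of the triangles formed on each sub-interval by the two
endpoint graph points and the tangent-intersection vertex. -/
noncomputable def polyRelaxation (g g' : ℝ → ℝ) (P : Finset ℝ) : Set (ℝ × ℝ) :=
  convexHull ℝ
    (⋃ pq ∈ {pq : ℝ × ℝ | Consecutive P pq.1 pq.2},
      convexHull ℝ
        ({(pq.1, g pq.1), (pq.2, g pq.2), tangentVertex g g' pq.1 pq.2} :
          Set (ℝ × ℝ)))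

section aux

variable {a b : ℝ} {g g' : ℝ → ℝ}

/-- Tangent line lies below the graph. -/
lemma tangent_le (hconv : ConvexOn ℝ (Set.Icc a b) g)
    (hderiv : ∀ x ∈ Set.Icc a b, HasDerivAt g (g' x) x)
    {x u : ℝ} (hx : x ∈ Set.Icc a b) (hu : u ∈ Set.Icc a b) :
    g x + g' x * (u - x) ≤ g u := by
  rcases lt_trichotomy x u with h | rfl | h
  · have h1 := hconv.le_slope_of_hasDerivAt hx hu h (hderiv x hx)
    rw [slope_def_field, le_div_iff₀ (by linarith)] at h1
    linarith
  · simp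
  · have h1 := hconv.slope_le_of_hasDerivAt hu hx h (hderiv x hx)
    rw [slope_def_field, div_le_iff₀ (by linarith)] at h1
    linarith

/-- Monotonicity of the derivative. -/
lemma deriv_mono (hconv : ConvexOn ℝ (Set.Icc a b) g)
    (hderiv : ∀ x ∈ Set.Icc a b, HasDerivAt g (g' x) x)
    {x u : ℝ} (hx : x ∈ Set.Icc a b) (hu : u ∈ Set.Icc a b) (hxu : x ≤ u) :
    g' x ≤ g' u := by
  rcases eq_or_lt_of_le hxu with rfl | h
  · exact le_refl _
  have h1 := tangent_le hconv hderiv hx hu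
  have h2 := tangent_le hconv hderiv hu hx
  nlinarith

/-- Secant lies above the graph (multiplied form). -/
lemma secant_ge (hconv : ConvexOn ℝ (Set.Icc a b) g)
    {p q t : ℝ} (hp : p ∈ Set.Icc a b) (hq : q ∈ Set.Icc a b)
    (hpq : p < q) (ht : t ∈ Set.Icc p q) :
    g t * (q - p) ≤ g p * (q - t) + g q * (t - p) := by
  obtain ⟨ht1, ht2⟩ := ht
  have hqp : (0:ℝ) < q - p := by linarith
  have h1 : (0:ℝ) ≤ (q - t) / (q - p) := by
    apply div_nonneg <;> linarith
  have h2 : (0:ℝ) ≤ (t - p) / (q - p) := by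
    apply div_nonneg <;> linarith
  have h3 : (q - t) / (q - p) + (t - p) / (q - p) = 1 := by
    field_simp
    ring
  have h4 : ((q - t) / (q - p)) • p + ((t - p) / (q - p)) • q = t := by
    simp only [smul_eq_mul]
    field_simp
    ring
  have h5 := hconv.2 hp hq h1 h2 h3
  rw [h4] at h5
  simp only [smul_eq_mul] at h5
  rw [div_mul_eq_mul_div, div_mul_eq_mul_div, ← add_div, le_div_iff₀ hqp] at h5
  linarith

lemma affine_deriv {g : ℝ → ℝ} {c m p q x d : ℝ} (hpq : p < q) (hx : x ∈ Set.Icc p q)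
    (hg : ∀ t ∈ Set.Icc p q, g t = c + m * t) (hd : HasDerivAt g d x) : d = m := by
  have h1 : HasDerivAt (fun t : ℝ => c + m * t) m x := by
    simpa using ((hasDerivAt_id x).const_mul m).const_add c
  have h2 : HasDerivWithinAt g m (Set.Icc p q) x :=
    h1.hasDerivWithinAt.congr (fun t ht => hg t ht) (hg x hx)
  exact UniqueDiffWithinAt.eq_deriv _ (uniqueDiffOn_Icc hpq x hx) hd.hasDerivWithinAt h2

/-- Strict version: the tangent at `p` is strictly below at `q`. -/
lemma strict_secantB (hconv : ConvexOn ℝ (Set.Icc a b) g)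
    (hderiv : ∀ x ∈ Set.Icc a b, HasDerivAt g (g' x) x)
    {p q : ℝ} (hp : p ∈ Set.Icc a b) (hq : q ∈ Set.Icc a b)
    (hpq : p < q) (hne : g' p ≠ g' q) : g p + g' p * (q - p) < g q := by
  rcases lt_or_eq_of_le (tangent_le hconv hderiv hp hq) with h | h
  · exact h
  exfalso
  apply hne
  have hsub : Set.Icc p q ⊆ Set.Icc a b := Set.Icc_subset_Icc hp.1 hq.2
  have hg : ∀ t ∈ Set.Icc p q, g t = (g p - g' p * p) + g' p * t := by
    intro t ht
    have hl := tangent_le hconv hderiv hp (hsub ht)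
    have hu := secant_ge hconv hp hq hpq ht
    have h6 : g t ≤ g p + g' p * (t - p) := by nlinarith [ht.1, ht.2]
    linarith
  have := affine_deriv hpq (Set.right_mem_Icc.mpr hpq.le) hg (hderiv q hq)
  exact this.symm

/-- Strict version: the tangent at `q` is strictly below at `p`. -/
lemma strict_secantA (hconv : ConvexOn ℝ (Set.Icc a b) g)
    (hderiv : ∀ x ∈ Set.Icc a b, HasDerivAt g (g' x) x)
    {p q : ℝ} (hp : p ∈ Set.Icc a b) (hq : q ∈ Set.Icc a b)
    (hpq : p < q) (hne : g' p ≠ g' q) : g q + g' q * (p - q) < g p := by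
  rcases lt_or_eq_of_le (tangent_le hconv hderiv hq hp) with h | h
  · exact h
  exfalso
  apply hne
  have hsub : Set.Icc p q ⊆ Set.Icc a b := Set.Icc_subset_Icc hp.1 hq.2
  have hg : ∀ t ∈ Set.Icc p q, g t = (g q - g' q * q) + g' q * t := by
    intro t ht
    have hl := tangent_le hconv hderiv hq (hsub ht)
    have hu := secant_ge hconv hp hq hpq ht
    have h6 : g t ≤ g q + g' q * (t - q) := by nlinarith [ht.1, ht.2]
    linarith
  exact affine_deriv hpq (Set.left_mem_Icc.mpr hpq.le) hg (hderiv p hp)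

/-- Any point of the slab region (below the secant, above both tangents)
lies in the triangle. -/
lemma mem_triangle (g g' : ℝ → ℝ) {p q x y : ℝ} (hpq : p < q) (hder : g' p < g' q)
    (hA : g q + g' q * (p - q) < g p)
    (hB : g p + g' p * (q - p) < g q)
    (h1 : g p + g' p * (x - p) ≤ y)
    (h2 : g q + g' q * (x - q) ≤ y)
    (h3 : y * (q - p) ≤ g p * (q - x) + g q * (x - p)) :
    (x, y) ∈ convexHull ℝ ({(p, g p), (q, g q), tangentVertex g g' p q} : Set (ℝ × ℝ)) := by
  have hdA0 : (0:ℝ) < g p - (g q + g' q * (p - q)) := by linarith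
  have hdB0 : (0:ℝ) < g q - (g p + g' p * (q - p)) := by linarith
  have hD : g' p - g' q ≠ 0 := by intro h; nlinarith
  set dA := g p - (g q + g' q * (p - q)) with hdA
  set dB := g q - (g p + g' p * (q - p)) with hdB
  set lA := (y - (g q + g' q * (x - q))) / dA with hlAdef
  set lB := (y - (g p + g' p * (x - p))) / dB with hlBdef
  have hlA : 0 ≤ lA := div_nonneg (by linarith) hdA0.le
  have hlB : 0 ≤ lB := div_nonneg (by linarith) hdB0.le
  have hqp : (0:ℝ) < q - p := by linarith
  have key : (y - (g q + g' q * (x - q))) * dB + (y - (g p + g' p * (x - p))) * dA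
      ≤ dA * dB := by
    have hid : ((g p * (q - x) + g q * (x - p)) - (g q + g' q * (x - q)) * (q - p)) * dB
        + ((g p * (q - x) + g q * (x - p)) - (g p + g' p * (x - p)) * (q - p)) * dA
        = dA * dB * (q - p) := by
      simp only [hdA, hdB]; ring
    have hy : 0 ≤ (g p * (q - x) + g q * (x - p)) - y * (q - p) := by linarith
    have h7 : ((y - (g q + g' q * (x - q))) * dB + (y - (g p + g' p * (x - p))) * dA) * (q - p)
        ≤ dA * dB * (q - p) := by
      nlinarith [mul_nonneg hy hdB0.le, mul_nonneg hy hdA0.le]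
    exact le_of_mul_le_mul_right (by linarith) hqp
  have hlAB : lA + lB ≤ 1 := by
    rw [hlAdef, hlBdef, div_add_div _ _ (ne_of_gt hdA0) (ne_of_gt hdB0),
      div_le_one (by positivity)]
    nlinarith [key]
  set lC := 1 - lA - lB with hlCdef
  have hlC : 0 ≤ lC := by linarith
  have hsum : lA • ((p : ℝ), g p) + lB • ((q : ℝ), g q) + lC • tangentVertex g g' p q
      = (x, y) := by
    unfold tangentVertex
    simp only [Prod.smul_mk, smul_eq_mul, Prod.mk_add_mk, Prod.mk.injEq]
    have hdA' : g p - (g q + g' q * (p - q)) ≠ 0 := ne_of_gt hdA0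
    have hdB' : g q - (g p + g' p * (q - p)) ≠ 0 := ne_of_gt hdB0
    constructor
    · simp only [hlCdef, hlAdef, hlBdef, hdA, hdB]
      field_simp
      ring
    · simp only [hlCdef, hlAdef, hlBdef, hdA, hdB]
      field_simp
      ring
  rw [← hsum]
  have hconvS := convex_convexHull ℝ
    ({(p, g p), (q, g q), tangentVertex g g' p q} : Set (ℝ × ℝ))
  have hmemA : ((p : ℝ), g p) ∈ convexHull ℝ
      ({(p, g p), (q, g q), tangentVertex g g' p q} : Set (ℝ × ℝ)) :=
    subset_convexHull ℝ _ (by simp)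
  have hmemB : ((q : ℝ), g q) ∈ convexHull ℝ
      ({(p, g p), (q, g q), tangentVertex g g' p q} : Set (ℝ × ℝ)) :=
    subset_convexHull ℝ _ (by simp)
  have hmemC : tangentVertex g g' p q ∈ convexHull ℝ
      ({(p, g p), (q, g q), tangentVertex g g' p q} : Set (ℝ × ℝ)) :=
    subset_convexHull ℝ _ (by simp)
  have hw0 : ∀ i ∈ (Finset.univ : Finset (Fin 3)), 0 ≤ (![lA, lB, lC]) i := by
    intro i _
    fin_cases i
    · simpa using hlA
    · simpa using hlB
    · simpa using hlC
  have hw1 : ∑ i ∈ (Finset.univ : Finset (Fin 3)), (![lA, lB, lC]) i = 1 := by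
    rw [Fin.sum_univ_three]
    show lA + lB + lC = 1
    rw [hlCdef]
    ring
  have hz0 : ∀ i ∈ (Finset.univ : Finset (Fin 3)),
      (![(p, g p), (q, g q), tangentVertex g g' p q]) i ∈
        convexHull ℝ ({(p, g p), (q, g q), tangentVertex g g' p q} : Set (ℝ × ℝ)) := by
    intro i _
    fin_cases i
    · simpa using hmemA
    · simpa using hmemB
    · simpa using hmemC
  have h8 := hconvS.sum_mem hw0 hw1 hz0
  simpa [Fin.sum_univ_three] using h8

/-- A consecutive pair of the refinement is enclosed in a consecutive pair of `P`. -/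
lemma exists_enclosing {a b : ℝ} (P P' : Finset ℝ) (hPP' : P ⊆ P') (haP : a ∈ P) (hbP : b ∈ P)
    (hP'sub : (P' : Set ℝ) ⊆ Set.Icc a b) {p' q' : ℝ} (hc : Consecutive P' p' q') :
    ∃ p q, Consecutive P p q ∧ p ≤ p' ∧ q' ≤ q := by
  classical
  obtain ⟨hp'P, hq'P, hplt, hno⟩ := hc
  have hp'ab : p' ∈ Set.Icc a b := hP'sub hp'P
  have hq'ab : q' ∈ Set.Icc a b := hP'sub hq'P
  have hL : (P.filter (· ≤ p')).Nonempty :=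
    ⟨a, Finset.mem_filter.mpr ⟨haP, hp'ab.1⟩⟩
  have hR : (P.filter (q' ≤ ·)).Nonempty :=
    ⟨b, Finset.mem_filter.mpr ⟨hbP, hq'ab.2⟩⟩
  set p := (P.filter (· ≤ p')).max' hL with hpdef
  set q := (P.filter (q' ≤ ·)).min' hR with hqdef
  have hpP : p ∈ P := (Finset.mem_filter.mp ((P.filter (· ≤ p')).max'_mem hL)).1
  have hpp' : p ≤ p' := (Finset.mem_filter.mp ((P.filter (· ≤ p')).max'_mem hL)).2
  have hqP : q ∈ P := (Finset.mem_filter.mp ((P.filter (q' ≤ ·)).min'_mem hR)).1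
  have hq'q : q' ≤ q := (Finset.mem_filter.mp ((P.filter (q' ≤ ·)).min'_mem hR)).2
  refine ⟨p, q, ⟨hpP, hqP, by linarith, ?_⟩, hpp', hq'q⟩
  rintro r hrP ⟨hr1, hr2⟩
  rcases le_or_gt r p' with hrp' | hrp'
  · have hmem : r ∈ P.filter (· ≤ p') := Finset.mem_filter.mpr ⟨hrP, hrp'⟩
    have hr : r ≤ (P.filter (· ≤ p')).max' hL := Finset.le_max' _ r hmem
    rw [← hpdef] at hr
    linarith
  rcases le_or_gt q' r with hrq' | hrq'
  · have hmem : r ∈ P.filter (q' ≤ ·) := Finset.mem_filter.mpr ⟨hrP, hrq'⟩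
    have hr : (P.filter (q' ≤ ·)).min' hR ≤ r := Finset.min'_le _ r hmem
    rw [← hqdef] at hr
    linarith
  exact hno r (hPP' hrP) ⟨hrp', hrq'⟩

end aux

theorem stmt_15 (a b : ℝ) (g g' : ℝ → ℝ) (hab : a < b)
    (hconv : ConvexOn ℝ (Set.Icc a b) g)
    (hderiv : ∀ x ∈ Set.Icc a b, HasDerivAt g (g' x) x)
    (P P' : Finset ℝ) (hPP' : P ⊆ P')
    (haP : a ∈ P) (hbP : b ∈ P)
    (hP'sub : (P' : Set ℝ) ⊆ Set.Icc a b)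
    (hP : ∀ p q, Consecutive P p q → g' p ≠ g' q)
    (hP' : ∀ p q, Consecutive P' p q → g' p ≠ g' q) :
    polyRelaxation g g' P' ⊆ polyRelaxation g g' P := by
  classical
  unfold polyRelaxation
  refine convexHull_min ?_ (convex_convexHull ℝ _)
  intro w hw
  simp only [Set.mem_iUnion, Set.mem_setOf_eq] at hw
  obtain ⟨pq, hcons, hw⟩ := hw
  obtain ⟨p', q'⟩ := pq
  simp only at hcons hw
  obtain ⟨p, q, hconsP, hpp', hq'q⟩ := exists_enclosing P P' hPP' haP hbP hP'sub hcons
  have hp'q' : p' < q' := hcons.2.2.1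
  have hp'ab : p' ∈ Set.Icc a b := hP'sub hcons.1
  have hq'ab : q' ∈ Set.Icc a b := hP'sub hcons.2.1
  have hpab : p ∈ Set.Icc a b := hP'sub (hPP' hconsP.1)
  have hqab : q ∈ Set.Icc a b := hP'sub (hPP' hconsP.2.1)
  have hpq : p < q := hconsP.2.2.1
  have hder : g' p < g' q :=
    lt_of_le_of_ne (deriv_mono hconv hderiv hpab hqab hpq.le) (hP p q hconsP)
  have hA := strict_secantA hconv hderiv hpab hqab hpq (hP p q hconsP)
  have hB := strict_secantB hconv hderiv hpab hqab hpq (hP p q hconsP)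
  -- The big target set and the enclosing triangle
  set T : Set (ℝ × ℝ) :=
    convexHull ℝ ({(p, g p), (q, g q), tangentVertex g g' p q} : Set (ℝ × ℝ)) with hT
  have hTsub : T ⊆ convexHull ℝ
      (⋃ pq ∈ {pq : ℝ × ℝ | Consecutive P pq.1 pq.2},
        convexHull ℝ
          ({(pq.1, g pq.1), (pq.2, g pq.2), tangentVertex g g' pq.1 pq.2} :
            Set (ℝ × ℝ))) := by
    refine Set.Subset.trans ?_ (subset_convexHull ℝ _)
    exact Set.subset_biUnion_of_mem (u := fun pq : ℝ × ℝ =>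
      convexHull ℝ ({(pq.1, g pq.1), (pq.2, g pq.2), tangentVertex g g' pq.1 pq.2} :
        Set (ℝ × ℝ))) (show ((p, q) : ℝ × ℝ) ∈ {pq : ℝ × ℝ | Consecutive P pq.1 pq.2} from hconsP)
  refine hTsub ?_
  -- Now show w belongs to the triangle T
  have hconvT : Convex ℝ T := convex_convexHull ℝ _
  refine convexHull_min ?_ hconvT hw
  intro z hz
  have hq'b : q' ≤ b := hq'ab.2
  have hap : a ≤ p := hpab.1
  have hqb : q ≤ b := hqab.2
  have hap' : a ≤ p' := hp'ab.1
  rcases hz with rfl | hz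
  · -- point (p', g p')
    rw [hT]
    exact mem_triangle g g' hpq hder hA hB
      (tangent_le hconv hderiv hpab hp'ab)
      (tangent_le hconv hderiv hqab hp'ab)
      (secant_ge hconv hpab hqab hpq ⟨hpp', by linarith⟩)
  rcases hz with rfl | hz
  · -- point (q', g q')
    rw [hT]
    exact mem_triangle g g' hpq hder hA hB
      (tangent_le hconv hderiv hpab hq'ab)
      (tangent_le hconv hderiv hqab hq'ab)
      (secant_ge hconv hpab hqab hpq ⟨by linarith, hq'q⟩)
  rcases hz with rfl
  -- the vertex of the small triangle
  have hne' : g' p' ≠ g' q' := hP' p' q' hcons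
  have hder' : g' p' < g' q' :=
    lt_of_le_of_ne (deriv_mono hconv hderiv hp'ab hq'ab hp'q'.le) hne'
  have hD' : g' p' - g' q' ≠ 0 := sub_ne_zero.mpr hne'
  have hA' := strict_secantA hconv hderiv hp'ab hq'ab hp'q' hne'
  have hB' := strict_secantB hconv hderiv hp'ab hq'ab hp'q' hne'
  set xv := (g q' - g p' - q' * g' q' + p' * g' p') / (g' p' - g' q') with hxvdef
  have hxvmul : xv * (g' p' - g' q') = g q' - g p' - q' * g' q' + p' * g' p' :=
    div_mul_cancel₀ _ hD'
  have hxvp : p' ≤ xv := by nlinarith [hxvmul, hA', hder']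
  have hxvq : xv ≤ q' := by nlinarith [hxvmul, hB', hder']
  have hxvab : xv ∈ Set.Icc a b := ⟨by linarith, by linarith⟩
  set yv := g p' + g' p' * (xv - p') with hyvdef
  have hVeq : tangentVertex g g' p' q' = (xv, yv) := by
    unfold tangentVertex
    rw [hxvdef, hyvdef]
  have hyv2 : yv = g q' + g' q' * (xv - q') := by
    rw [hyvdef]
    linear_combination hxvmul
  have hmono1 : g' p ≤ g' p' := deriv_mono hconv hderiv hpab hp'ab hpp'
  have hmono2 : g' q' ≤ g' q := deriv_mono hconv hderiv hq'ab hqab hq'q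
  have ht1 : g p + g' p * (xv - p) ≤ yv := by
    have := tangent_le hconv hderiv hpab hp'ab
    nlinarith [mul_nonneg (sub_nonneg.mpr hmono1) (sub_nonneg.mpr hxvp)]
  have ht2 : g q + g' q * (xv - q) ≤ yv := by
    rw [hyv2]
    have := tangent_le hconv hderiv hqab hq'ab
    nlinarith [mul_nonneg (sub_nonneg.mpr hmono2) (sub_nonneg.mpr hxvq)]
  have ht3 : yv * (q - p) ≤ g p * (q - xv) + g q * (xv - p) := by
    have hbelow : yv ≤ g xv := by
      have := tangent_le hconv hderiv hp'ab hxvab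
      linarith
    have hsec := secant_ge hconv hpab hqab hpq
      (⟨by linarith, by linarith⟩ : xv ∈ Set.Icc p q)
    nlinarith [hbelow, hpq]
  rw [hT, hVeq]
  exact mem_triangle g g' hpq hder hA hB ht1 ht2 ht3
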